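/- For all integers n ≥ 2 and d ≥ 2, there exists a minimal non-basic subset M ⊆ [n]^d with |M| = 2n such that every layer of [n]^d has non-empty intersection with M; namely, M = {(k,k,…,k), (k+1,k,…,k) : k ∈ [n−1]} ∪ {(n,n,…,n), (1,n,…,n)} is such a set. Hence the lower bound 2n for minimal non-basic subsets meeting every layer cannot be improved. -/

import Mathlib

/-- A finite subset `M ⊆ [n]^d` (the cube identified with `Fin d → Fin n`) is *basic*
if every function on `M` decomposes as a sum of univariate functions. -/
def IsBasic {n d : ℕ} (M : Finset (Fin d → Fin n)) : Prop :=
  ∀ f : (Fin d → Fin n) → ℝ, ∃ g : Fin d → Fin n → ℝ,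
    ∀ x ∈ M, f x = ∑ i, g i (x i)

namespace MNB

variable {n d : ℕ}

def pA (hn : 2 ≤ n) (k : ℕ) : Fin d → Fin n := fun _ => ⟨k % n, Nat.mod_lt _ (by omega)⟩

def pB (hn : 2 ≤ n) (hd : 1 < d) (k : ℕ) : Fin d → Fin n :=
  fun j => if j = (⟨0, by omega⟩ : Fin d) then ⟨(k+1) % n, Nat.mod_lt _ (by omega)⟩
    else ⟨k % n, Nat.mod_lt _ (by omega)⟩

def pC (hn : 2 ≤ n) (hd : 1 < d) : Fin d → Fin n :=
  fun j => if j = (⟨0, by omega⟩ : Fin d) then ⟨0, by omega⟩ else ⟨n-1, by omega⟩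

section pts
variable (hn : 2 ≤ n) (hd : 1 < d)

lemma i1_ne_i0 : (⟨1, by omega⟩ : Fin d) ≠ ⟨0, by omega⟩ := by
  simp [Fin.ext_iff]

lemma pA_apply (k : ℕ) (i : Fin d) :
    pA (d := d) hn k i = ⟨k % n, Nat.mod_lt _ (by omega)⟩ := rfl

lemma pB_apply_zero (k : ℕ) :
    pB hn hd k ⟨0, by omega⟩ = ⟨(k+1) % n, Nat.mod_lt _ (by omega)⟩ := by simp [pB]

lemma pB_apply_ne (k : ℕ) (j : Fin d) (hj : j ≠ ⟨0, by omega⟩) :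
    pB hn hd k j = ⟨k % n, Nat.mod_lt _ (by omega)⟩ := by simp [pB, hj]

lemma pC_apply_zero : pC hn hd ⟨0, by omega⟩ = ⟨0, by omega⟩ := by simp [pC]

lemma pC_apply_ne (j : Fin d) (hj : j ≠ ⟨0, by omega⟩) :
    pC hn hd j = ⟨n - 1, by omega⟩ := by simp [pC, hj]

lemma pA_inj (hd : 2 ≤ d) {k m : ℕ} (hk : k < n) (hm : m < n) (h : pA (d := d) hn k = pA hn m) :
    k = m := by
  have := congrFun h ⟨0, by omega⟩
  simp only [pA, Fin.mk.injEq] at this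
  rwa [Nat.mod_eq_of_lt hk, Nat.mod_eq_of_lt hm] at this

lemma pB_inj {k m : ℕ} (hk : k < n - 1) (hm : m < n - 1) (h : pB hn hd k = pB hn hd m) :
    k = m := by
  have h1 := congrFun h ⟨1, by omega⟩
  simp [pB, Fin.ext_iff] at h1
  rwa [Nat.mod_eq_of_lt (show k < n by omega), Nat.mod_eq_of_lt (show m < n by omega)] at h1

lemma pA_ne_pB {k m : ℕ} (hk : k < n) (hm : m < n - 1) :
    pA (d := d) hn k ≠ pB hn hd m := by
  intro h
  have h0 := congrFun h ⟨0, by omega⟩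
  have h1 := congrFun h ⟨1, by omega⟩
  simp [pA, pB, Fin.ext_iff] at h0 h1
  rw [Nat.mod_eq_of_lt hk, Nat.mod_eq_of_lt (show m + 1 < n by omega)] at h0
  rw [Nat.mod_eq_of_lt hk, Nat.mod_eq_of_lt (show m < n by omega)] at h1
  omega

lemma pA_ne_pC {k : ℕ} (hk : k < n) : pA (d := d) hn k ≠ pC hn hd := by
  intro h
  have h0 := congrFun h ⟨0, by omega⟩
  have h1 := congrFun h ⟨1, by omega⟩
  simp [pA, pC, Fin.ext_iff] at h0 h1
  rw [Nat.mod_eq_of_lt hk] at h0 h1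
  omega

lemma pB_ne_pC {k : ℕ} (hk : k < n - 1) : pB hn hd k ≠ pC hn hd := by
  intro h
  have h0 := congrFun h ⟨0, by omega⟩
  simp [pB, pC, Fin.ext_iff] at h0
  rw [Nat.mod_eq_of_lt (show k + 1 < n by omega)] at h0
  omega

/-- Every decomposable function satisfies the cycle relation. -/
lemma relation (f : (Fin d → Fin n) → ℝ) (g : Fin d → Fin n → ℝ)
    (ha : ∀ k < n, f (pA hn k) = ∑ i, g i (pA hn k i))
    (hb : ∀ k < n - 1, f (pB hn hd k) = ∑ i, g i (pB hn hd k i))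
    (hc : f (pC hn hd) = ∑ i, g i (pC hn hd i)) :
    f (pC hn hd) = ∑ k ∈ Finset.range n, f (pA hn k)
      - ∑ k ∈ Finset.range (n-1), f (pB hn hd k) := by
  set i0 : Fin d := ⟨0, by omega⟩ with hi0
  set S : ℕ → ℝ := fun m => ∑ i, g i (pA hn m i) with hS
  set G : ℕ → ℝ := fun m => g i0 ⟨m % n, Nat.mod_lt _ (by omega)⟩ with hG
  -- b-points
  have hb' : ∀ k, ∑ i, g i (pB hn hd k i) = S k - G k + G (k+1) := by
    intro k
    rw [hS]
    simp only
    rw [← Finset.add_sum_erase _ _ (Finset.mem_univ i0),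
        ← Finset.add_sum_erase _ (fun i => g i (pA hn k i)) (Finset.mem_univ i0)]
    have hrest : ∑ i ∈ Finset.univ.erase i0, g i (pB hn hd k i)
        = ∑ i ∈ Finset.univ.erase i0, g i (pA hn k i) := by
      refine Finset.sum_congr rfl fun i hi => ?_
      rw [pB_apply_ne hn hd _ _ (Finset.ne_of_mem_erase hi), pA_apply]
    rw [hrest, pB_apply_zero, pA_apply]
    rw [hG]
    simp only
    ring
  have hc' : ∑ i, g i (pC hn hd i) = S (n-1) - G (n-1) + G 0 := by
    rw [hS]
    simp only
    rw [← Finset.add_sum_erase _ _ (Finset.mem_univ i0),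
        ← Finset.add_sum_erase _ (fun i => g i (pA hn (n-1) i)) (Finset.mem_univ i0)]
    have hrest : ∑ i ∈ Finset.univ.erase i0, g i (pC hn hd i)
        = ∑ i ∈ Finset.univ.erase i0, g i (pA hn (n-1) i) := by
      refine Finset.sum_congr rfl fun i hi => ?_
      rw [pC_apply_ne hn hd _ (Finset.ne_of_mem_erase hi), pA_apply]
      congr 1
      simp [Nat.mod_eq_of_lt (show n - 1 < n by omega)]
    rw [hrest, pC_apply_zero, pA_apply]
    rw [hG]
    simp only
    have e1 : (⟨(n-1) % n, Nat.mod_lt _ (by omega)⟩ : Fin n) = ⟨n-1, by omega⟩ := by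
      simp [Nat.mod_eq_of_lt (show n - 1 < n by omega)]
    have e2 : (⟨0 % n, Nat.mod_lt _ (by omega)⟩ : Fin n) = ⟨0, by omega⟩ := by
      simp
    rw [e1, e2]
    ring
  have hsumA : ∑ k ∈ Finset.range n, f (pA (d := d) hn k) = ∑ k ∈ Finset.range n, S k := by
    refine Finset.sum_congr rfl fun k hk => ha k (Finset.mem_range.mp hk)
  have hsumB : ∑ k ∈ Finset.range (n-1), f (pB hn hd k)
      = ∑ k ∈ Finset.range (n-1), S k + (G (n-1) - G 0) := by
    have : ∀ k ∈ Finset.range (n-1), f (pB hn hd k) = S k + (G (k+1) - G k) := by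
      intro k hk
      rw [hb k (Finset.mem_range.mp hk), hb' k]; ring
    rw [Finset.sum_congr rfl this, Finset.sum_add_distrib, Finset.sum_range_sub (fun m => G m)]
  have hrangeA : ∑ k ∈ Finset.range n, S k = ∑ k ∈ Finset.range (n-1), S k + S (n-1) := by
    have h1 : Finset.range n = Finset.range ((n-1)+1) := by
      congr 1; omega
    rw [h1, Finset.sum_range_succ]
  rw [hc, hc', hsumA, hsumB, hrangeA]
  ring

def uF (hn : 2 ≤ n) (hd : 2 ≤ d) (f : (Fin d → Fin n) → ℝ) (m : ℕ) : ℝ :=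
  ∑ k ∈ Finset.range m, (f (pB hn hd k) - f (pA (d := d) hn k))

lemma sum_split (f : (Fin d → Fin n) → ℝ) (x : Fin d → Fin n) :
    ∑ i, ((if i = (⟨0, by omega⟩ : Fin d) then uF hn hd f ((x i : Fin n) : ℕ) else 0)
      + (if i = (⟨1, by omega⟩ : Fin d) then
          f (pA hn ((x i : Fin n) : ℕ)) - uF hn hd f ((x i : Fin n) : ℕ) else 0))
      = uF hn hd f ((x ⟨0, by omega⟩ : Fin n) : ℕ)
        + (f (pA hn ((x ⟨1, by omega⟩ : Fin n) : ℕ))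
            - uF hn hd f ((x ⟨1, by omega⟩ : Fin n) : ℕ)) := by
  rw [Finset.sum_add_distrib]
  simp [Finset.sum_ite_eq']

/-- Consistency implies decomposability on the whole cycle. -/
lemma decomp (f : (Fin d → Fin n) → ℝ)
    (hf : f (pC hn hd) = ∑ k ∈ Finset.range n, f (pA (d := d) hn k)
        - ∑ k ∈ Finset.range (n-1), f (pB hn hd k)) :
    ∃ g : Fin d → Fin n → ℝ,
      (∀ k < n, f (pA hn k) = ∑ i, g i (pA hn k i)) ∧
      (∀ k < n - 1, f (pB hn hd k) = ∑ i, g i (pB hn hd k i)) ∧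
      f (pC hn hd) = ∑ i, g i (pC hn hd i) := by
  refine ⟨fun i j => (if i = (⟨0, by omega⟩ : Fin d) then uF hn hd f (j : ℕ) else 0)
      + (if i = (⟨1, by omega⟩ : Fin d) then
          f (pA hn (j : ℕ)) - uF hn hd f (j : ℕ) else 0), ?_, ?_, ?_⟩
  · intro k hk
    refine Eq.trans ?_ (sum_split hn hd f (pA hn k)).symm
    have e0 : ((pA (d := d) hn k ⟨0, by omega⟩ : Fin n) : ℕ) = k := by
      simp [pA, Nat.mod_eq_of_lt hk]
    have e1 : ((pA (d := d) hn k ⟨1, by omega⟩ : Fin n) : ℕ) = k := by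
      simp [pA, Nat.mod_eq_of_lt hk]
    rw [e0, e1]
    ring
  · intro k hk
    refine Eq.trans ?_ (sum_split hn hd f (pB hn hd k)).symm
    have e0 : ((pB hn hd k ⟨0, by omega⟩ : Fin n) : ℕ) = k + 1 := by
      simp [pB, Nat.mod_eq_of_lt (show k + 1 < n by omega)]
    have e1 : ((pB hn hd k ⟨1, by omega⟩ : Fin n) : ℕ) = k := by
      simp [pB, Fin.ext_iff, Nat.mod_eq_of_lt (show k < n by omega)]
    rw [e0, e1]
    have hstep : uF hn hd f (k+1) = uF hn hd f k + (f (pB hn hd k) - f (pA hn k)) :=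
      Finset.sum_range_succ _ _
    rw [hstep]
    ring
  · refine Eq.trans ?_ (sum_split hn hd f (pC hn hd)).symm
    have e0 : ((pC hn hd ⟨0, by omega⟩ : Fin n) : ℕ) = 0 := by simp [pC]
    have e1 : ((pC hn hd ⟨1, by omega⟩ : Fin n) : ℕ) = n - 1 := by
      simp [pC, Fin.ext_iff]
    rw [e0, e1, hf]
    have h0 : uF hn hd f 0 = 0 := by simp [uF]
    have hsub : uF hn hd f (n-1) = ∑ k ∈ Finset.range (n-1), f (pB hn hd k)
        - ∑ k ∈ Finset.range (n-1), f (pA (d := d) hn k) := by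
      rw [uF, Finset.sum_sub_distrib]
    have hr : ∑ k ∈ Finset.range n, f (pA (d := d) hn k)
        = ∑ k ∈ Finset.range (n-1), f (pA (d := d) hn k) + f (pA hn (n-1)) := by
      have h1 : Finset.range n = Finset.range ((n-1)+1) := by congr 1; omega
      rw [h1, Finset.sum_range_succ]
    rw [h0, hsub, hr]
    ring

lemma sum_adj (s : Finset ℕ) (p : ℕ → (Fin d → Fin n))
    (hp : ∀ a ∈ s, ∀ b ∈ s, p a = p b → a = b)
    {m : ℕ} (hm : m ∈ s) (f : (Fin d → Fin n) → ℝ) (t : ℝ) :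
    ∑ k ∈ s, (if p k = p m then t else f (p k)) = ∑ k ∈ s, f (p k) - f (p m) + t := by
  rw [← Finset.add_sum_erase _ _ hm, ← Finset.add_sum_erase _ (fun k => f (p k)) hm,
    if_pos (rfl : p m = p m)]
  have he : ∑ k ∈ s.erase m, (if p k = p m then t else f (p k))
      = ∑ k ∈ s.erase m, f (p k) := by
    refine Finset.sum_congr rfl fun k hk => ?_
    exact if_neg fun h =>
      (Finset.ne_of_mem_erase hk) (hp k (Finset.mem_of_mem_erase hk) m hm h)
  rw [he]; ring

lemma sum_noadj (s : Finset ℕ) (p : ℕ → (Fin d → Fin n)) (x : Fin d → Fin n)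
    (hx : ∀ a ∈ s, p a ≠ x) (f : (Fin d → Fin n) → ℝ) (t : ℝ) :
    ∑ k ∈ s, (if p k = x then t else f (p k)) = ∑ k ∈ s, f (p k) :=
  Finset.sum_congr rfl fun k hk => if_neg (hx k hk)

lemma mem_char (x : Fin d → Fin n) :
    ((∃ k : Fin n, ∀ j, x j = k) ∨
      (∃ k : Fin n, (x ⟨0, by omega⟩ : ℕ) = (k : ℕ) + 1 ∧
        ∀ j, j ≠ ⟨0, by omega⟩ → x j = k) ∨
      ((x ⟨0, by omega⟩ : ℕ) = 0 ∧ ∀ j, j ≠ ⟨0, by omega⟩ → (x j : ℕ) = n - 1)) ↔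
    ((∃ k < n, x = pA hn k) ∨ (∃ k < n - 1, x = pB hn hd k) ∨ x = pC hn hd) := by
  constructor
  · rintro (⟨k, hk⟩ | ⟨k, hk0, hk⟩ | ⟨h0, h1⟩)
    · refine Or.inl ⟨k.1, k.2, funext fun j => ?_⟩
      rw [hk j]
      simp [pA, Fin.ext_iff, Nat.mod_eq_of_lt k.2]
    · have hkn : k.1 < n - 1 := by have := (x ⟨0, by omega⟩).2; omega
      refine Or.inr (Or.inl ⟨k.1, hkn, funext fun j => ?_⟩)
      by_cases hj : j = ⟨0, by omega⟩
      · subst hj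
        simp [pB, Fin.ext_iff, Nat.mod_eq_of_lt (show k.1 + 1 < n by omega), hk0]
      · rw [hk j hj]
        simp [pB, hj, Fin.ext_iff, Nat.mod_eq_of_lt k.2]
    · refine Or.inr (Or.inr (funext fun j => ?_))
      by_cases hj : j = ⟨0, by omega⟩
      · subst hj
        simp [pC, Fin.ext_iff, h0]
      · simp [pC, hj, Fin.ext_iff, h1 j hj]
  · rintro (⟨k, hk, rfl⟩ | ⟨k, hk, rfl⟩ | rfl)
    · exact Or.inl ⟨⟨k, hk⟩, fun j => by simp [pA, Fin.ext_iff, Nat.mod_eq_of_lt hk]⟩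
    · refine Or.inr (Or.inl ⟨⟨k, by omega⟩, ?_, fun j hj => ?_⟩)
      · simp [pB, Nat.mod_eq_of_lt (show k + 1 < n by omega)]
      · simp [pB, hj, Fin.ext_iff, Nat.mod_eq_of_lt (show k < n by omega)]
    · exact Or.inr (Or.inr ⟨by simp [pC], fun j hj => by simp [pC, hj]⟩)

lemma main (M : Finset (Fin d → Fin n))
    (hmem : ∀ x, x ∈ M ↔
      ((∃ k < n, x = pA hn k) ∨ (∃ k < n - 1, x = pB hn hd k) ∨ x = pC hn hd)) :
    ¬ IsBasic M ∧ (∀ K ⊂ M, IsBasic K) ∧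
      (∀ (i : Fin d) (j : Fin n), ∃ x ∈ M, x i = j) ∧ M.card = 2 * n := by
  have hAinj : ∀ a ∈ Finset.range n, ∀ b ∈ Finset.range n,
      pA (d := d) hn a = pA hn b → a = b := fun a ha b hb h =>
    pA_inj hn hd (Finset.mem_range.1 ha) (Finset.mem_range.1 hb) h
  have hBinj : ∀ a ∈ Finset.range (n-1), ∀ b ∈ Finset.range (n-1),
      pB hn hd a = pB hn hd b → a = b := fun a ha b hb h =>
    pB_inj hn hd (Finset.mem_range.1 ha) (Finset.mem_range.1 hb) h
  refine ⟨?_, ?_, ?_, ?_⟩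
  -- not basic
  · intro hB
    obtain ⟨g, hg⟩ := hB (fun y => if y = pC hn hd then 1 else 0)
    have hrel := relation hn hd (fun y => if y = pC hn hd then 1 else 0) g
      (fun k hk => hg _ ((hmem _).2 (Or.inl ⟨k, hk, rfl⟩)))
      (fun k hk => hg _ ((hmem _).2 (Or.inr (Or.inl ⟨k, hk, rfl⟩))))
      (hg _ ((hmem _).2 (Or.inr (Or.inr rfl))))
    simp only [if_pos rfl] at hrel
    rw [Finset.sum_congr rfl (fun k hk =>
        if_neg (pA_ne_pC hn hd (Finset.mem_range.1 hk))),
      Finset.sum_congr rfl (fun k hk =>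
        if_neg (pB_ne_pC hn hd (Finset.mem_range.1 hk)))] at hrel
    simp at hrel
  -- minimal
  · intro K hK f
    obtain ⟨x, hxM, hxK⟩ := Finset.exists_of_ssubset hK
    set E : ℝ := (∑ k ∈ Finset.range n, f (pA hn k))
      - (∑ k ∈ Finset.range (n-1), f (pB hn hd k)) - f (pC hn hd) with hE
    rcases (hmem x).1 hxM with ⟨m, hm, rfl⟩ | ⟨m, hm, rfl⟩ | rfl
    · obtain ⟨g, hga, hgb, hgc⟩ := decomp hn hd
        (fun y => if y = pA hn m then f (pA hn m) - E else f y) (by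
          rw [if_neg (fun h => pA_ne_pC hn hd hm h.symm),
            sum_adj (Finset.range n) (pA hn) hAinj (Finset.mem_range.2 hm) f _,
            sum_noadj (Finset.range (n-1)) (pB hn hd) (pA hn m)
              (fun a ha => (pA_ne_pB hn hd hm (Finset.mem_range.1 ha)).symm) f _]
          rw [hE]; ring)
      refine ⟨g, fun y hy => ?_⟩
      have hyx : y ≠ pA hn m := fun h => hxK (h ▸ hy)
      rcases (hmem y).1 (hK.subset hy) with ⟨k, hk, rfl⟩ | ⟨k, hk, rfl⟩ | rfl
      · have h := hga k hk; rwa [if_neg hyx] at h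
      · have h := hgb k hk; rwa [if_neg hyx] at h
      · rwa [if_neg hyx] at hgc
    · obtain ⟨g, hga, hgb, hgc⟩ := decomp hn hd
        (fun y => if y = pB hn hd m then f (pB hn hd m) + E else f y) (by
          rw [if_neg (fun h => pB_ne_pC hn hd hm h.symm),
            sum_noadj (Finset.range n) (pA hn) (pB hn hd m)
              (fun a ha => pA_ne_pB hn hd (Finset.mem_range.1 ha) hm) f _,
            sum_adj (Finset.range (n-1)) (pB hn hd) hBinj (Finset.mem_range.2 hm) f _]
          rw [hE]; ring)
      refine ⟨g, fun y hy => ?_⟩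
      have hyx : y ≠ pB hn hd m := fun h => hxK (h ▸ hy)
      rcases (hmem y).1 (hK.subset hy) with ⟨k, hk, rfl⟩ | ⟨k, hk, rfl⟩ | rfl
      · have h := hga k hk; rwa [if_neg hyx] at h
      · have h := hgb k hk; rwa [if_neg hyx] at h
      · rwa [if_neg hyx] at hgc
    · obtain ⟨g, hga, hgb, hgc⟩ := decomp hn hd
        (fun y => if y = pC hn hd then f (pC hn hd) + E else f y) (by
          simp only
          rw [if_true,
            sum_noadj (Finset.range n) (pA hn) (pC hn hd)
              (fun a ha => pA_ne_pC hn hd (Finset.mem_range.1 ha)) f _,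
            sum_noadj (Finset.range (n-1)) (pB hn hd) (pC hn hd)
              (fun a ha => pB_ne_pC hn hd (Finset.mem_range.1 ha)) f _]
          rw [hE]; ring)
      refine ⟨g, fun y hy => ?_⟩
      have hyx : y ≠ pC hn hd := fun h => hxK (h ▸ hy)
      rcases (hmem y).1 (hK.subset hy) with ⟨k, hk, rfl⟩ | ⟨k, hk, rfl⟩ | rfl
      · have h := hga k hk; rwa [if_neg hyx] at h
      · have h := hgb k hk; rwa [if_neg hyx] at h
      · exact absurd rfl hyx
  -- layers
  · intro i j
    refine ⟨pA hn j.1, (hmem _).2 (Or.inl ⟨j.1, j.2, rfl⟩), ?_⟩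
    simp [pA, Fin.ext_iff, Nat.mod_eq_of_lt j.2]
  -- cardinality
  · have hMeq : M = ((Finset.range n).image (pA hn)
        ∪ (Finset.range (n-1)).image (pB hn hd)) ∪ {pC hn hd} := by
      ext x
      rw [hmem]
      simp only [Finset.mem_union, Finset.mem_image, Finset.mem_range,
        Finset.mem_singleton]
      constructor
      · rintro (⟨k, hk, rfl⟩ | ⟨k, hk, rfl⟩ | rfl)
        · exact Or.inl (Or.inl ⟨k, hk, rfl⟩)
        · exact Or.inl (Or.inr ⟨k, hk, rfl⟩)
        · exact Or.inr rfl
      · rintro ((⟨k, hk, rfl⟩ | ⟨k, hk, rfl⟩) | rfl)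
        · exact Or.inl ⟨k, hk, rfl⟩
        · exact Or.inr (Or.inl ⟨k, hk, rfl⟩)
        · exact Or.inr (Or.inr rfl)
    have hd1 : Disjoint ((Finset.range n).image (pA hn))
        ((Finset.range (n-1)).image (pB hn hd)) := by
      rw [Finset.disjoint_left]
      rintro x hx hx'
      obtain ⟨a, ha, rfl⟩ := Finset.mem_image.1 hx
      obtain ⟨b, hb, hEq⟩ := Finset.mem_image.1 hx'
      exact pA_ne_pB hn hd (Finset.mem_range.1 ha) (Finset.mem_range.1 hb) hEq.symm
    have hd2 : Disjoint ((Finset.range n).image (pA hn)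
        ∪ (Finset.range (n-1)).image (pB hn hd)) ({pC hn hd} : Finset _) := by
      rw [Finset.disjoint_right]
      intro x hx hx'
      rw [Finset.mem_singleton] at hx
      subst hx
      rcases Finset.mem_union.1 hx' with h | h
      · obtain ⟨a, ha, hEq⟩ := Finset.mem_image.1 h
        exact pA_ne_pC hn hd (Finset.mem_range.1 ha) hEq
      · obtain ⟨a, ha, hEq⟩ := Finset.mem_image.1 h
        exact pB_ne_pC hn hd (Finset.mem_range.1 ha) hEq
    rw [hMeq, Finset.card_union_of_disjoint hd2, Finset.card_union_of_disjoint hd1,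
      Finset.card_image_of_injOn (fun a ha b hb h => hAinj a ha b hb h),
      Finset.card_image_of_injOn (fun a ha b hb h => hBinj a ha b hb h),
      Finset.card_range, Finset.card_range, Finset.card_singleton]
    omega

end pts

end MNB

/-- For `n, d ≥ 2`, the set
`M = {(k,…,k), (k+1,k,…,k) : k ∈ [n−1]} ∪ {(n,…,n), (1,n,…,n)}` (written 0-indexed in
`Fin n`: all constant tuples, the tuples with first entry one more than the common value of the
remaining entries, and the tuple with first entry `1` and remaining entries `n`) is a minimal
non-basic subset of `[n]^d` of cardinality `2n` meeting every layer; hence the lower bound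
`2n` for minimal non-basic subsets meeting every layer cannot be improved. -/
theorem minimal_nonbasic_card_two_n {n d : ℕ} (hn : 2 ≤ n) (hd : 2 ≤ d) :
    ∃ M : Finset (Fin d → Fin n),
      M = Finset.univ.filter (fun x : Fin d → Fin n =>
        (∃ k : Fin n, ∀ j, x j = k) ∨
        (∃ k : Fin n, (x ⟨0, by omega⟩ : ℕ) = (k : ℕ) + 1 ∧
          ∀ j, j ≠ ⟨0, by omega⟩ → x j = k) ∨
        ((x ⟨0, by omega⟩ : ℕ) = 0 ∧ ∀ j, j ≠ ⟨0, by omega⟩ → (x j : ℕ) = n - 1)) ∧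
      ¬ IsBasic M ∧ (∀ K ⊂ M, IsBasic K) ∧
      (∀ (i : Fin d) (j : Fin n), ∃ x ∈ M, x i = j) ∧
      M.card = 2 * n := by
  have hmem : ∀ x : Fin d → Fin n,
      x ∈ Finset.univ.filter (fun x : Fin d → Fin n =>
        (∃ k : Fin n, ∀ j, x j = k) ∨
        (∃ k : Fin n, (x ⟨0, by omega⟩ : ℕ) = (k : ℕ) + 1 ∧
          ∀ j, j ≠ ⟨0, by omega⟩ → x j = k) ∨
        ((x ⟨0, by omega⟩ : ℕ) = 0 ∧ ∀ j, j ≠ ⟨0, by omega⟩ → (x j : ℕ) = n - 1)) ↔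
      ((∃ k < n, x = MNB.pA hn k) ∨ (∃ k < n - 1, x = MNB.pB hn hd k) ∨
        x = MNB.pC hn hd) := by
    intro x
    rw [Finset.mem_filter]
    simp only [Finset.mem_univ, true_and]
    exact MNB.mem_char hn hd x
  obtain ⟨h1, h2, h3, h4⟩ := MNB.main hn hd _ hmem
  exact ⟨_, rfl, h1, h2, h3, h4⟩
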